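/- For finitely supported real sequences b = {b_I}, β = {β_J}, independent uniform ±1 random signs σ = {σ_J}, and any φ ∈ L²(ℝ), E ‖P^{0,1}_b (P^{σ,1,0}_β φ)‖_2² = Σ_{J∈𝒟} ⟨φ, h_J⟩² β_J² Σ_{I∈𝒟, I∩J≠∅} b_I² ⟨h¹_I, h¹_J⟩². -/

import Mathlib

open MeasureTheory ProbabilityTheory Real Filter
open scoped ENNReal

attribute [local instance] Classical.propDecidable

noncomputable section

namespace RandomParaproducts

/-- Dyadic intervals: `(n, k)` represents `[k·2ⁿ, (k+1)·2ⁿ)`. -/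
abbrev D : Type := ℤ × ℤ

/-- The length `2ⁿ` of the dyadic interval `(n, k)`. -/
def len (I : D) : ℝ := (2 : ℝ) ^ I.1

/-- The dyadic interval `[k·2ⁿ, (k+1)·2ⁿ)` as a subset of `ℝ`. -/
def ival (I : D) : Set ℝ := Set.Ico ((I.2 : ℝ) * (2 : ℝ) ^ I.1) (((I.2 : ℝ) + 1) * (2 : ℝ) ^ I.1)

/-- The left half of a dyadic interval. -/
def lc (I : D) : D := (I.1 - 1, 2 * I.2)

/-- The right half of a dyadic interval. -/
def rc (I : D) : D := (I.1 - 1, 2 * I.2 + 1)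

/-- The `L²`-normalized Haar function `h_I = h⁰_I`. -/
def haar (I : D) : ℝ → ℝ := fun x =>
  (Real.sqrt (len I))⁻¹ *
    ((ival (rc I)).indicator (fun _ => (1 : ℝ)) x - (ival (lc I)).indicator (fun _ => (1 : ℝ)) x)

/-- The function `h¹_I = |h_I| = |I|^{-1/2} 1_I`. -/
def haar1 (I : D) : ℝ → ℝ := fun x =>
  (Real.sqrt (len I))⁻¹ * (ival I).indicator (fun _ => (1 : ℝ)) x

/-- `h^ε_I`, where `false` codes the exponent `0` and `true` codes the exponent `1`. -/
def hfun : Bool → D → ℝ → ℝ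
  | false => haar
  | true => haar1

/-- The inner product `⟨f, g⟩ = ∫ f g` on `L²(ℝ)`. -/
def ip (f g : ℝ → ℝ) : ℝ := ∫ x, f x * g x

/-- The paraproduct `P^{ε,δ}_b f = ∑_I b_I ⟨f, h^δ_I⟩ h^ε_I` with finitely supported
numerical symbol `b`. -/
def P (e d : Bool) (b : D →₀ ℝ) (f : ℝ → ℝ) : ℝ → ℝ := fun x =>
  ∑ I ∈ b.support, b I * ip f (hfun d I) * hfun e I x

/-- The signed paraproduct `P^{σ,ε,δ}_b f = ∑_I σ_I b_I ⟨f, h^δ_I⟩ h^ε_I`. -/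
def Psig (σ : D → ℝ) (e d : Bool) (b : D →₀ ℝ) (f : ℝ → ℝ) : ℝ → ℝ := fun x =>
  ∑ I ∈ b.support, σ I * (b I * ip f (hfun d I) * hfun e I x)

/-- The square of the `L²(ℝ)` norm, `‖g‖₂² = ∫ g²`. -/
def l2normSq (g : ℝ → ℝ) : ℝ := ∫ x, (g x) ^ 2

/-- The Carleson norm of a sequence `a` whose nonzero entries lie in the finite set `s`:
`sup_J (|J|⁻¹ ∑_{I ⊆ J} a_I² |I|)^{1/2}`. -/
def carlOn (s : Finset D) (a : D → ℝ) : ℝ :=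
  ⨆ J : D, Real.sqrt ((len J)⁻¹ *
    ∑ I ∈ s.filter (fun I => ival I ⊆ ival J), (a I) ^ 2 * len I)

/-- `μ` is the law of independent uniformly distributed random signs `{σ_I : I ∈ 𝒟}`. -/
def IsSignMeasure (μ : Measure (D → ℝ)) : Prop :=
  IsProbabilityMeasure μ ∧
    iIndepFun (m := fun _ : D => (inferInstance : MeasurableSpace ℝ)) (fun I σ => σ I) μ ∧
    ∀ I : D, μ.map (fun σ => σ I) =
      (2⁻¹ : ℝ≥0∞) • (Measure.dirac (1 : ℝ) + Measure.dirac (-1 : ℝ))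

/-- `f` is a unit vector of `L²(ℝ)`. -/
def UnitL2 (f : ℝ → ℝ) : Prop := MemLp f 2 volume ∧ eLpNorm f 2 volume = 1

/-- The operator norm on `L²(ℝ)` of a map defined on functions. -/
def opNorm (T : (ℝ → ℝ) → ℝ → ℝ) : ℝ :=
  ⨆ f : {f : ℝ → ℝ // UnitL2 f}, Real.sqrt (l2normSq (T f.1))

/-- The averaged operator norm `sup_{‖f‖₂ = 1} (𝔼 ‖T_σ f‖₂²)^{1/2}`. -/
def avgOpNorm (μ : Measure (D → ℝ)) (T : (D → ℝ) → (ℝ → ℝ) → ℝ → ℝ) : ℝ :=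
  ⨆ f : {f : ℝ → ℝ // UnitL2 f}, Real.sqrt (∫ σ, l2normSq (T σ f.1) ∂μ)

/-- `b` is the finite linear combination of Haar functions with coefficients `c`. -/
def FinHaar (b : ℝ → ℝ) (c : D →₀ ℝ) : Prop :=
  b = fun x => ∑ I ∈ c.support, c I * haar I x

/-- The paraproduct `P^{ε,γ}_{b,α} f = ∑_{I} (⟨b, h^α_I⟩/|I|^{1/2}) ⟨f, h^γ_I⟩ h^ε_I` with
function symbol `b`, the sum extended over a finite set `s` containing all the
nonvanishing terms. -/
def Pb (s : Finset D) (e g a : Bool) (b : ℝ → ℝ) (f : ℝ → ℝ) : ℝ → ℝ := fun x =>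
  ∑ I ∈ s, (ip b (hfun a I) / Real.sqrt (len I)) * ip f (hfun g I) * hfun e I x

lemma measurableSet_ival (I : D) : MeasurableSet (ival I) := measurableSet_Ico

lemma volume_ival_ne_top (I : D) : volume (ival I) ≠ ⊤ := by
  simp only [ival, Real.volume_Ico]; exact ENNReal.ofReal_ne_top

lemma memℒp_haar (I : D) : MemLp (haar I) 2 volume := by
  have h1 : MemLp ((ival (rc I)).indicator (fun _ => (1 : ℝ))) 2 volume :=
    memLp_indicator_const 2 (measurableSet_ival _) 1 (Or.inr (volume_ival_ne_top _))
  have h2 : MemLp ((ival (lc I)).indicator (fun _ => (1 : ℝ))) 2 volume :=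
    memLp_indicator_const 2 (measurableSet_ival _) 1 (Or.inr (volume_ival_ne_top _))
  exact ((h1.sub h2).const_mul ((Real.sqrt (len I))⁻¹))

/-- The Haar function `h_I` as an element of `L²(ℝ)`. -/
def haarLp (I : D) : Lp ℝ 2 (volume : Measure ℝ) := (memℒp_haar I).toLp (haar I)

/-- The random Haar multiplier `T_σ f = ∑_{I ∈ 𝒟} σ_I ⟨f, h_I⟩ h_I`, as an element of
`L²(ℝ)`; the (infinite) sum converges unconditionally in `L²`. -/
def Tfull (σ : D → ℝ) (g : ℝ → ℝ) : Lp ℝ 2 (volume : Measure ℝ) :=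
  ∑' I : D, (σ I * ip g (haar I)) • haarLp I

/-- The composition `M_b T_σ M_β` applied to `f`, as a function. -/
def MbTM (σ : D → ℝ) (b β f : ℝ → ℝ) : ℝ → ℝ := fun x =>
  b x * (Tfull σ fun y => β y * f y) x

lemma len_pos (I : D) : 0 < len I := by
  unfold len; positivity

lemma two_zpow_split (n : ℤ) : (2:ℝ)^n = 2^(n-1) + 2^(n-1) := by
  have h := zpow_add_one₀ (two_ne_zero (α := ℝ)) (n-1)
  rw [sub_add_cancel] at h
  rw [h]; ring

lemma ival_lc (I : D) :
    ival (lc I) = Set.Ico ((I.2:ℝ)*2^I.1) ((I.2:ℝ)*2^I.1 + 2^(I.1-1)) := by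
  unfold ival lc
  rw [two_zpow_split I.1]
  push_cast
  congr 1 <;> ring

lemma ival_rc (I : D) :
    ival (rc I) = Set.Ico ((I.2:ℝ)*2^I.1 + 2^(I.1-1)) (((I.2:ℝ)+1)*2^I.1) := by
  unfold ival rc
  rw [two_zpow_split I.1]
  push_cast
  congr 1 <;> ring

lemma ival_union (I : D) : ival (lc I) ∪ ival (rc I) = ival I := by
  rw [ival_lc, ival_rc, Set.Ico_union_Ico_eq_Ico]
  · rfl
  · have : (0:ℝ) < 2^(I.1-1) := by positivity
    linarith
  · have h := two_zpow_split I.1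
    have : (0:ℝ) ≤ 2^(I.1-1) := by positivity
    nlinarith

lemma disj_lc_rc (I : D) : Disjoint (ival (lc I)) (ival (rc I)) := by
  rw [ival_lc, ival_rc, Set.Ico_disjoint_Ico]
  exact le_trans (min_le_left _ _) (le_max_right _ _)

lemma haar_eq_zero {I : D} {x : ℝ} (hx : x ∉ ival I) : haar I x = 0 := by
  have hl : x ∉ ival (lc I) := fun h => hx (ival_union I ▸ Set.mem_union_left _ h)
  have hr : x ∉ ival (rc I) := fun h => hx (ival_union I ▸ Set.mem_union_right _ h)
  simp [haar, Set.indicator_of_notMem hl, Set.indicator_of_notMem hr]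

lemma dyadic_tri {I J : D} (h : I.1 ≤ J.1) : ival I ⊆ ival J ∨ Disjoint (ival I) (ival J) := by
  obtain ⟨N, hN⟩ : ∃ N : ℕ, J.1 - I.1 = N := ⟨(J.1 - I.1).toNat, (Int.toNat_of_nonneg (by omega)).symm⟩
  have hp : (0:ℝ) < 2 ^ I.1 := by positivity
  have h2m : (2:ℝ)^J.1 = ((2^N : ℤ) : ℝ) * 2^I.1 := by
    rw [show J.1 = I.1 + (N:ℤ) by omega, zpow_add₀ (two_ne_zero (α := ℝ))]
    push_cast
    rw [zpow_natCast]; ring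
  have key : ∀ L : ℤ, (I.2:ℝ) * 2^I.1 < L * 2^J.1 → (L:ℝ) * 2^J.1 < ((I.2:ℝ)+1) * 2^I.1 → False := by
    intro L h1 h2
    rw [h2m, ← mul_assoc] at h1 h2
    push_cast at h1 h2
    have e1 := lt_of_mul_lt_mul_right h1 hp.le
    have e2 := lt_of_mul_lt_mul_right h2 hp.le
    have e1' : (I.2:ℤ) < L * 2^N := by exact_mod_cast e1
    have e2' : L * 2^N < I.2 + 1 := by exact_mod_cast e2
    omega
  by_cases hd : ((J.2:ℝ)+1)*2^J.1 ≤ (I.2:ℝ)*2^I.1 ∨ ((I.2:ℝ)+1)*2^I.1 ≤ (J.2:ℝ)*2^J.1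
  · right
    rw [ival, ival, Set.Ico_disjoint_Ico]
    rcases hd with hd | hd
    · exact le_trans (min_le_right _ _) (le_trans hd (le_max_left _ _))
    · exact le_trans (min_le_left _ _) (le_trans hd (le_max_right _ _))
  · push_neg at hd
    obtain ⟨hd1, hd2⟩ := hd
    left
    have c1 : (J.2:ℝ)*2^J.1 ≤ (I.2:ℝ)*2^I.1 := by
      by_contra hc; push_neg at hc
      exact key J.2 hc hd2
    have c2 : ((I.2:ℝ)+1)*2^I.1 ≤ ((J.2:ℝ)+1)*2^J.1 := by
      by_contra hc; push_neg at hc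
      refine key (J.2+1) ?_ ?_ <;> push_cast <;> linarith
    exact Set.Ico_subset_Ico c1 c2
lemma haar1_eq_zero {I : D} {x : ℝ} (hx : x ∉ ival I) : haar1 I x = 0 := by
  simp [haar1, Set.indicator_of_notMem hx]

lemma memℒp_haar1 (I : D) : MemLp (haar1 I) 2 volume := by
  have h1 : MemLp ((ival I).indicator (fun _ => (1 : ℝ))) 2 volume :=
    memLp_indicator_const 2 (measurableSet_ival _) 1 (Or.inr (volume_ival_ne_top _))
  exact h1.const_mul _

lemma memℒp_hfun (e : Bool) (I : D) : MemLp (hfun e I) 2 volume := by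
  cases e
  · exact memℒp_haar I
  · exact memℒp_haar1 I

lemma integrable_indicator_ival (I : D) :
    Integrable ((ival I).indicator (fun _ => (1:ℝ))) volume :=
  (integrable_indicator_iff (measurableSet_ival I)).2
    ((integrableOn_const_iff).2 (Or.inr (lt_top_iff_ne_top.2 (volume_ival_ne_top I))))

lemma vol_ival (I : D) : (volume (ival I)).toReal = len I := by
  unfold ival len
  rw [Real.volume_Ico, show ((I.2:ℝ)+1)*2^I.1 - I.2*2^I.1 = 2^I.1 by ring,
    ENNReal.toReal_ofReal (by positivity)]

lemma integral_indicator_ival (I : D) :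
    ∫ x, (ival I).indicator (fun _ => (1:ℝ)) x = len I := by
  rw [integral_indicator_const _ (measurableSet_ival I), measureReal_def, vol_ival, smul_eq_mul, mul_one]

lemma integral_haar (I : D) : ∫ x, haar I x = 0 := by
  unfold haar
  rw [integral_const_mul, integral_sub (integrable_indicator_ival _) (integrable_indicator_ival _),
    integral_indicator_ival, integral_indicator_ival]
  simp [len, lc, rc]

lemma ip_eq_zero_of_disjoint {I J : D} (h : Disjoint (ival I) (ival J)) :
    ip (haar I) (haar J) = 0 := by
  unfold ip
  have hz : ∀ x, haar I x * haar J x = 0 := by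
    intro x
    by_cases hx : x ∈ ival I
    · rw [haar_eq_zero (Set.disjoint_left.1 h hx), mul_zero]
    · rw [haar_eq_zero hx, zero_mul]
  simp [hz]

lemma ip_haar1_zero {I J : D} (h : ¬ (ival I ∩ ival J).Nonempty) :
    ip (haar1 I) (haar1 J) = 0 := by
  have hd : Disjoint (ival I) (ival J) :=
    Set.disjoint_iff_inter_eq_empty.2 (Set.not_nonempty_iff_eq_empty.1 h)
  unfold ip
  have hz : ∀ x, haar1 I x * haar1 J x = 0 := by
    intro x
    by_cases hx : x ∈ ival I
    · rw [haar1_eq_zero (Set.disjoint_left.1 hd hx), mul_zero]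
    · rw [haar1_eq_zero hx, zero_mul]
  simp [hz]

lemma haar_mul_self (I : D) (x : ℝ) :
    haar I x * haar I x = (len I)⁻¹ * (ival I).indicator (fun _ => (1:ℝ)) x := by
  have he : (Real.sqrt (len I))⁻¹ * (Real.sqrt (len I))⁻¹ = (len I)⁻¹ := by
    rw [← mul_inv, Real.mul_self_sqrt (len_pos I).le]
  by_cases hl : x ∈ ival (lc I)
  · have hr : x ∉ ival (rc I) := fun hr => Set.disjoint_left.1 (disj_lc_rc I) hl hr
    have hm : x ∈ ival I := (ival_union I) ▸ Set.mem_union_left _ hl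
    simp only [haar, Set.indicator_of_mem hl, Set.indicator_of_notMem hr,
      Set.indicator_of_mem hm]
    nlinarith [he]
  · by_cases hr : x ∈ ival (rc I)
    · have hm : x ∈ ival I := (ival_union I) ▸ Set.mem_union_right _ hr
      simp only [haar, Set.indicator_of_mem hr, Set.indicator_of_notMem hl,
        Set.indicator_of_mem hm]
      nlinarith [he]
    · have hm : x ∉ ival I := by
        rw [← ival_union I]
        rintro (h | h) <;> [exact hl h; exact hr h]
      simp only [haar, Set.indicator_of_notMem hr, Set.indicator_of_notMem hl,
        Set.indicator_of_notMem hm]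
      ring

lemma ip_haar_self (I : D) : ip (haar I) (haar I) = 1 := by
  unfold ip
  simp_rw [haar_mul_self]
  rw [integral_const_mul, integral_indicator_ival, inv_mul_cancel₀ (len_pos I).ne']

lemma ip_comm (f g : ℝ → ℝ) : ip f g = ip g f := by
  unfold ip; simp_rw [mul_comm]

lemma ip_haar_zero_aux {I J : D} (hle : I.1 ≤ J.1) (hne : I ≠ J) :
    ip (haar I) (haar J) = 0 := by
  by_cases hn : I.1 = J.1
  · -- same scale: disjoint
    have hk : I.2 ≠ J.2 := fun hk => hne (Prod.ext hn hk)
    rcases dyadic_tri hle with hsub | hdis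
    · exfalso
      have hp : (0:ℝ) < 2 ^ I.1 := by positivity
      have hmem : (I.2:ℝ) * 2^I.1 ∈ ival I := Set.mem_Ico.2 ⟨le_refl _, by nlinarith⟩
      obtain ⟨h1, h2⟩ := hsub hmem
      rw [← hn] at h1 h2
      have e1 : (J.2:ℝ) ≤ I.2 := le_of_mul_le_mul_right h1 hp
      have e2 : (I.2:ℝ) < (J.2:ℝ) + 1 := by nlinarith
      have e1' : J.2 ≤ I.2 := by exact_mod_cast e1
      have e2' : I.2 < J.2 + 1 := by exact_mod_cast e2
      omega
    · exact ip_eq_zero_of_disjoint hdis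
  · have hlt : I.1 ≤ J.1 - 1 := by omega
    have hconst : ∀ c : ℝ, (∀ x ∈ ival I, haar J x = c) → ip (haar I) (haar J) = 0 := by
      intro c hc
      have hz : ∀ x, haar I x * haar J x = haar I x * c := by
        intro x
        by_cases hx : x ∈ ival I
        · rw [hc x hx]
        · rw [haar_eq_zero hx, zero_mul, zero_mul]
      unfold ip
      simp_rw [hz, mul_comm _ c]
      rw [integral_const_mul, integral_haar, mul_zero]
    rcases dyadic_tri (I := I) (J := lc J) hlt with hsub | hdisl
    · refine hconst (-(Real.sqrt (len J))⁻¹) (fun x hx => ?_)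
      have hlx : x ∈ ival (lc J) := hsub hx
      have hrx : x ∉ ival (rc J) := fun h => Set.disjoint_left.1 (disj_lc_rc J) hlx h
      simp [haar, Set.indicator_of_mem hlx, Set.indicator_of_notMem hrx]
    · rcases dyadic_tri (I := I) (J := rc J) hlt with hsub | hdisr
      · refine hconst ((Real.sqrt (len J))⁻¹) (fun x hx => ?_)
        have hrx : x ∈ ival (rc J) := hsub hx
        have hlx : x ∉ ival (lc J) := fun h => Set.disjoint_left.1 (disj_lc_rc J) h hrx
        simp [haar, Set.indicator_of_mem hrx, Set.indicator_of_notMem hlx]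
      · refine ip_eq_zero_of_disjoint ?_
        rw [← ival_union J]
        exact Set.disjoint_union_right.2 ⟨hdisl, hdisr⟩

lemma ip_haar (I J : D) : ip (haar I) (haar J) = if I = J then 1 else 0 := by
  by_cases h : I = J
  · rw [if_pos h, h, ip_haar_self]
  · rw [if_neg h]
    rcases le_total I.1 J.1 with hle | hle
    · exact ip_haar_zero_aux hle h
    · rw [ip_comm]
      exact ip_haar_zero_aux hle (Ne.symm h)
@[simp] lemma hfun_false : hfun false = haar := rfl
@[simp] lemma hfun_true : hfun true = haar1 := rfl

lemma integrable_mul_L2 {f g : ℝ → ℝ} (hf : MemLp f 2 volume) (hg : MemLp g 2 volume) :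
    Integrable (fun x => f x * g x) volume := by
  have h := L2.integrable_inner (𝕜 := ℝ) (hf.toLp f) (hg.toLp g)
  refine (integrable_congr ?_).1 h
  filter_upwards [hf.coeFn_toLp, hg.coeFn_toLp] with x h1 h2
  rw [RCLike.inner_apply, h1, h2]
  simp [mul_comm]

lemma ip_sum_left {α : Type*} (s : Finset α) (g : α → ℝ → ℝ) (f : ℝ → ℝ)
    (hint : ∀ a ∈ s, Integrable (fun x => g a x * f x) volume) :
    ip (fun x => ∑ a ∈ s, g a x) f = ∑ a ∈ s, ip (g a) f := by
  unfold ip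
  simp_rw [Finset.sum_mul]
  rw [integral_finset_sum s hint]

lemma ip_const_mul (c : ℝ) (f g : ℝ → ℝ) : ip (fun x => c * f x) g = c * ip f g := by
  unfold ip; simp_rw [mul_assoc]; rw [integral_const_mul]

lemma integrable_haar_term (cI cJ : ℝ) (I J : D) :
    Integrable (fun x => (cI * haar I x) * (cJ * haar J x)) volume := by
  have h := (integrable_mul_L2 (memℒp_haar I) (memℒp_haar J)).const_mul (cI * cJ)
  exact h.congr (Filter.Eventually.of_forall (fun x => by ring))

lemma l2normSq_sum (s : Finset D) (a : D → ℝ) :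
    l2normSq (fun x => ∑ I ∈ s, a I * haar I x) = ∑ I ∈ s, (a I)^2 := by
  unfold l2normSq
  have step1 : ∀ x : ℝ, (∑ I ∈ s, a I * haar I x)^2 =
      ∑ I ∈ s, ∑ J ∈ s, (a I * haar I x) * (a J * haar J x) := by
    intro x; rw [sq, Finset.sum_mul_sum]
  simp_rw [step1]
  rw [integral_finset_sum _ (fun I _ => integrable_finset_sum _
    (fun J _ => integrable_haar_term (a I) (a J) I J))]
  have step2 : ∀ I ∈ s, ∫ x, ∑ J ∈ s, (a I * haar I x) * (a J * haar J x) = (a I)^2 := by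
    intro I hI
    rw [integral_finset_sum _ (fun J _ => integrable_haar_term (a I) (a J) I J)]
    have step3 : ∀ J ∈ s, ∫ x, (a I * haar I x) * (a J * haar J x) =
        (a I * a J) * (if I = J then 1 else 0) := by
      intro J _
      rw [← ip_haar]
      unfold ip
      rw [← integral_const_mul]
      congr 1; funext x; ring
    rw [Finset.sum_congr rfl step3]
    simp_rw [mul_ite, mul_one, mul_zero]
    rw [Finset.sum_ite_eq s I (fun J => a I * a J), if_pos hI, sq]
  rw [Finset.sum_congr rfl step2]

lemma sign_ae {μ : Measure (D → ℝ)} (hμ : IsSignMeasure μ) (J : D) :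
    ∀ᵐ σ ∂μ, σ J = 1 ∨ σ J = -1 := by
  obtain ⟨hprob, hind, hlaw⟩ := hμ
  have hmeas : Measurable (fun σ : D → ℝ => σ J) := measurable_pi_apply J
  have hs : MeasurableSet {x : ℝ | ¬(x = 1 ∨ x = -1)} := by
    have : {x : ℝ | ¬(x = 1 ∨ x = -1)} = ({1, -1} : Set ℝ)ᶜ := by
      ext x; simp [Set.mem_compl_iff]
    rw [this]
    exact (Set.Finite.measurableSet (by simp)).compl
  have h0 : μ.map (fun σ => σ J) {x : ℝ | ¬(x = 1 ∨ x = -1)} = 0 := by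
    rw [hlaw J]
    simp only [Measure.smul_apply, Measure.add_apply, Measure.dirac_apply' _ hs]
    norm_num
  rw [Measure.map_apply hmeas hs] at h0
  exact (ae_iff).2 h0

lemma integrable_sign_mul {μ : Measure (D → ℝ)} (hμ : IsSignMeasure μ) (J J' : D) :
    Integrable (fun σ => σ J * σ J') μ := by
  haveI : IsProbabilityMeasure μ := hμ.1
  refine (integrable_const (1:ℝ)).mono'
    (((measurable_pi_apply J).mul (measurable_pi_apply J')).aestronglyMeasurable) ?_
  filter_upwards [sign_ae hμ J, sign_ae hμ J'] with σ h1 h2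
  rcases h1 with h1 | h1 <;> rcases h2 with h2 | h2 <;> simp [h1, h2]

lemma integrable_sign {μ : Measure (D → ℝ)} (hμ : IsSignMeasure μ) (J : D) :
    Integrable (fun σ => σ J) μ := by
  haveI : IsProbabilityMeasure μ := hμ.1
  refine (integrable_const (1:ℝ)).mono'
    ((measurable_pi_apply J).aestronglyMeasurable) ?_
  filter_upwards [sign_ae hμ J] with σ h1
  rcases h1 with h1 | h1 <;> simp [h1]

lemma E_sign {μ : Measure (D → ℝ)} (hμ : IsSignMeasure μ) (J : D) :
    ∫ σ, σ J ∂μ = 0 := by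
  obtain ⟨hprob, hind, hlaw⟩ := hμ
  have hmeas : Measurable (fun σ : D → ℝ => σ J) := measurable_pi_apply J
  have h := integral_map (μ := μ) (f := fun x : ℝ => x) hmeas.aemeasurable
    (aestronglyMeasurable_id)
  rw [← h, hlaw J, integral_smul_measure]
  have hd : ∀ a : ℝ, Integrable (fun x : ℝ => x) (Measure.dirac a) := by
    intro a
    refine (integrable_const a).congr ?_
    rw [ae_dirac_eq]
    exact Filter.eventually_pure.2 rfl
  rw [integral_add_measure (hd 1) (hd (-1)), integral_dirac, integral_dirac]
  norm_num

lemma E_sign_mul {μ : Measure (D → ℝ)} (hμ : IsSignMeasure μ) (J J' : D) :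
    ∫ σ, σ J * σ J' ∂μ = if J = J' then 1 else 0 := by
  by_cases h : J = J'
  · subst h
    rw [if_pos rfl]
    haveI : IsProbabilityMeasure μ := hμ.1
    have : ∫ σ, σ J * σ J ∂μ = ∫ _σ, (1:ℝ) ∂μ := by
      refine integral_congr_ae ?_
      filter_upwards [sign_ae hμ J] with σ h1
      rcases h1 with h1 | h1 <;> simp [h1]
    rw [this]; simp
  · rw [if_neg h]
    have hi : IndepFun (fun σ : D → ℝ => σ J) (fun σ : D → ℝ => σ J') μ :=
      hμ.2.1.indepFun h
    rw [hi.integral_fun_mul_eq_mul_integral (measurable_pi_apply J).aestronglyMeasurable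
      (measurable_pi_apply J').aestronglyMeasurable, E_sign hμ J, zero_mul]

lemma integral_sq_sum {μ : Measure (D → ℝ)} (hμ : IsSignMeasure μ) (t : Finset D) (d : D → ℝ) :
    ∫ σ, (∑ J ∈ t, σ J * d J)^2 ∂μ = ∑ J ∈ t, (d J)^2 := by
  have hexp : ∀ σ : D → ℝ, (∑ J ∈ t, σ J * d J)^2 =
      ∑ J ∈ t, ∑ J' ∈ t, (d J * d J') * (σ J * σ J') := by
    intro σ; rw [sq, Finset.sum_mul_sum]
    exact Finset.sum_congr rfl (fun J _ => Finset.sum_congr rfl (fun J' _ => by ring))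
  simp_rw [hexp]
  rw [integral_finset_sum _ (fun J _ => integrable_finset_sum _ (fun J' _ =>
    (integrable_sign_mul hμ J J').const_mul _))]
  have step : ∀ J ∈ t, ∫ σ, ∑ J' ∈ t, (d J * d J') * (σ J * σ J') ∂μ = (d J)^2 := by
    intro J hJ
    rw [integral_finset_sum _ (fun J' _ => (integrable_sign_mul hμ J J').const_mul _)]
    have step2 : ∀ J' ∈ t, ∫ σ, (d J * d J') * (σ J * σ J') ∂μ =
        (d J * d J') * (if J = J' then 1 else 0) := by
      intro J' _
      rw [integral_const_mul, E_sign_mul hμ]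
    rw [Finset.sum_congr rfl step2]
    simp_rw [mul_ite, mul_one, mul_zero]
    rw [Finset.sum_ite_eq t J (fun J' => d J * d J'), if_pos hJ, sq]
  rw [Finset.sum_congr rfl step]
lemma pointwise (b β : D →₀ ℝ) (φ : ℝ → ℝ) (σ : D → ℝ) :
    l2normSq (P false true b (Psig σ true false β φ)) =
      ∑ I ∈ b.support, (b I)^2 *
        (∑ J ∈ β.support, σ J * ((β J * ip φ (haar J)) * ip (haar1 J) (haar1 I)))^2 := by
  have hip : ∀ I : D, ip (Psig σ true false β φ) (haar1 I) =
      ∑ J ∈ β.support, σ J * ((β J * ip φ (haar J)) * ip (haar1 J) (haar1 I)) := by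
    intro I
    have hps : Psig σ true false β φ = fun x => ∑ J ∈ β.support,
        (σ J * (β J * ip φ (haar J))) * haar1 J x := by
      funext x
      simp only [Psig, hfun_false, hfun_true]
      exact Finset.sum_congr rfl (fun J _ => by ring)
    rw [hps, ip_sum_left _ _ _ (fun J _ => ?_)]
    · exact Finset.sum_congr rfl (fun J _ => by rw [ip_const_mul]; ring)
    · have h := (integrable_mul_L2 (memℒp_haar1 J) (memℒp_haar1 I)).const_mul
        (σ J * (β J * ip φ (haar J)))
      exact h.congr (Filter.Eventually.of_forall (fun x => by ring))
  have hP : P false true b (Psig σ true false β φ) = fun x =>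
      ∑ I ∈ b.support, (b I * ip (Psig σ true false β φ) (haar1 I)) * haar I x := by
    funext x
    simp only [P, hfun_false, hfun_true]
  rw [hP, l2normSq_sum]
  exact Finset.sum_congr rfl (fun I _ => by rw [hip I, mul_pow])
/-- `𝔼 ‖P^{0,1}_b (P^{σ,1,0}_β φ)‖₂²
= ∑_J ⟨φ, h_J⟩² β_J² ∑_{I ∩ J ≠ ∅} b_I² ⟨h¹_I, h¹_J⟩²`. -/
theorem statement13 (b β : D →₀ ℝ) (μ : Measure (D → ℝ)) (hμ : IsSignMeasure μ)
    (φ : ℝ → ℝ) (hφ : MemLp φ 2 volume) :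
    ∫ σ, l2normSq (P false true b (Psig σ true false β φ)) ∂μ =
      ∑ J ∈ β.support, (ip φ (haar J)) ^ 2 * (β J) ^ 2 *
        ∑ I ∈ b.support.filter (fun I => (ival I ∩ ival J).Nonempty),
          (b I) ^ 2 * (ip (haar1 I) (haar1 J)) ^ 2 := by
  simp_rw [pointwise b β φ]
  rw [integral_finset_sum _ (fun I _ => ?_)]
  · -- main computation
    have step : ∀ I ∈ b.support,
        ∫ σ, (b I)^2 * (∑ J ∈ β.support, σ J *
          ((β J * ip φ (haar J)) * ip (haar1 J) (haar1 I)))^2 ∂μ =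
        (b I)^2 * ∑ J ∈ β.support, ((β J * ip φ (haar J)) * ip (haar1 J) (haar1 I))^2 := by
      intro I _
      rw [integral_const_mul, integral_sq_sum hμ]
    rw [Finset.sum_congr rfl step]
    simp_rw [Finset.mul_sum]
    rw [Finset.sum_comm]
    refine Finset.sum_congr rfl (fun J _ => ?_)
    have hf : ∑ I ∈ b.support.filter (fun I => (ival I ∩ ival J).Nonempty),
        (ip φ (haar J))^2 * (β J)^2 * ((b I)^2 * (ip (haar1 I) (haar1 J))^2)
        = ∑ I ∈ b.support,
          (ip φ (haar J))^2 * (β J)^2 * ((b I)^2 * (ip (haar1 I) (haar1 J))^2) :=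
      Finset.sum_filter_of_ne (fun I _hI h => by
        by_contra hc
        exact h (by rw [ip_haar1_zero hc]; ring))
    rw [hf]
    refine Finset.sum_congr rfl (fun I _ => ?_)
    rw [ip_comm (haar1 I) (haar1 J)]
    ring
  · -- integrability
    have hexp : ∀ σ : D → ℝ, (b I)^2 * (∑ J ∈ β.support, σ J *
        ((β J * ip φ (haar J)) * ip (haar1 J) (haar1 I)))^2 =
        ∑ J ∈ β.support, ∑ J' ∈ β.support,
          ((b I)^2 * (((β J * ip φ (haar J)) * ip (haar1 J) (haar1 I)) *
            ((β J' * ip φ (haar J')) * ip (haar1 J') (haar1 I)))) * (σ J * σ J') := by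
      intro σ
      rw [sq (∑ J ∈ β.support, _), Finset.sum_mul_sum, Finset.mul_sum]
      refine Finset.sum_congr rfl (fun J _ => ?_)
      rw [Finset.mul_sum]
      exact Finset.sum_congr rfl (fun J' _ => by ring)
    simp_rw [hexp]
    exact integrable_finset_sum _ (fun J _ => integrable_finset_sum _
      (fun J' _ => (integrable_sign_mul hμ J J').const_mul _))

end RandomParaproducts
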